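/- arXiv:math/0612546 — 2 statements merged into one kernel-verified Lean document; each statement's English description precedes it below -/
import Mathlib

section
/- Relative concentration inequality. Let (Z,T) be a measurable space, π a probability measure, and Z_1,…,Z_n i.i.d. with law π. Let F be a set, Q : Z × F → ℝ a loss with z ↦ Q(z,f) measurable, A(f) = E[Q(Z_1,f)], A_n(f) = (1/n)Σ_{i=1}^n Q(Z_i,f), and f* ∈ F with A(f*) = min_{f∈F} A(f), A* = A(f*). Let f_1,…,f_M ∈ F and assume: for some κ ≥ 1 and c > 0, E[(Q(Z_1,f_j) − Q(Z_1,f*))²] ≤ c (A(f_j) − A*)^{1/κ} for every j, and |Q(Z_1,f_j) − Q(Z_1,f*)| ≤ K almost surely for every j, with K ≥ 1. Then for any positive reals t and x and any integer n ≥ 1: P[ max_{1≤j≤M} ( A(f_j) − A_n(f_j) − (A(f*) − A_n(f*)) ) / ( A(f_j) − A* + x ) > t ] ≤ M [ (1 + 4c x^{1/κ}/(n (t x)²)) exp( − n (t x)² / (4 c x^{1/κ}) ) + (1 + 4K/(3 n t x)) exp( − 3 n t x / (4K) ) ]. -/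
open MeasureTheory ProbabilityTheory

lemma exp_le_one_add_add_sq {m : ℝ} (hm : m ≤ 3/2) : Real.exp m ≤ 1 + m + m^2 := by
  rcases le_or_gt m (-1) with h | h
  · have h1 : Real.exp m ≤ Real.exp (-1) := Real.exp_le_exp.mpr h
    have h2 : Real.exp (-1) ≤ 1/2 := by
      rw [Real.exp_neg]
      rw [inv_le_comm₀ (Real.exp_pos 1) (by norm_num)]
      have := Real.exp_one_gt_d9
      linarith
    nlinarith [sq_nonneg (m + 1/2)]
  · have habs : |m/2| ≤ 1 := by rw [abs_le]; constructor <;> linarith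
    have hb := Real.exp_bound habs (by norm_num : 0 < 3)
    have hsum : ∑ i ∈ Finset.range 3, (m/2) ^ i / (Nat.factorial i) = 1 + m/2 + m^2/8 := by
      simp [Finset.sum_range_succ, Nat.factorial]
      ring
    rw [hsum] at hb
    norm_num [Nat.factorial] at hb
    have hb' : Real.exp (m/2) ≤ 1 + m/2 + m^2/8 + |m/2|^3 * (2/9) := by
      have := (abs_sub_le_iff.1 hb).1
      linarith
    have hpos : (0:ℝ) < Real.exp (m/2) := Real.exp_pos _
    have hexp : Real.exp m = Real.exp (m/2) * Real.exp (m/2) := by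
      rw [← Real.exp_add]; ring_nf
    rcases le_or_gt 0 m with hm0 | hm0
    · have habs3 : |m/2|^3 = m^3/8 := by
        rw [abs_of_nonneg (by linarith : (0:ℝ) ≤ m/2)]; ring
      rw [habs3] at hb'
      have hR : Real.exp (m/2) ≤ 1 + m/2 + m^2/8 + m^3/36 := by linarith
      have hRsq : Real.exp m ≤ (1 + m/2 + m^2/8 + m^3/36)^2 := by
        rw [hexp]
        have := mul_le_mul hR hR hpos.le (by nlinarith)
        nlinarith
      nlinarith [pow_le_pow_left₀ hm0 hm 2, pow_le_pow_left₀ hm0 hm 3,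
        mul_nonneg (mul_nonneg hm0 hm0) hm0, sq_nonneg m, sq_nonneg (m^2),
        mul_nonneg (mul_nonneg (mul_nonneg hm0 hm0) hm0) hm0]
    · have habs3 : |m/2|^3 = -(m^3)/8 := by
        rw [abs_of_nonpos (by linarith : m/2 ≤ 0)]; ring
      rw [habs3] at hb'
      have hR : Real.exp (m/2) ≤ 1 + m/2 + m^2/8 - m^3/36 := by linarith
      have hRsq : Real.exp m ≤ (1 + m/2 + m^2/8 - m^3/36)^2 := by
        rw [hexp]
        have := mul_le_mul hR hR hpos.le (by nlinarith)
        nlinarith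
      have hm1 : (0:ℝ) ≤ 1 + m := by linarith
      nlinarith [sq_nonneg m, sq_nonneg (m^2), sq_nonneg (m+1),
        mul_nonneg (mul_nonneg (sq_nonneg m) (sq_nonneg m)) hm1,
        mul_nonneg (sq_nonneg (m^2)) (sq_nonneg (1+m)),
        mul_nonneg (sq_nonneg m) hm1]

lemma bernstein_mgf_bound {Z : Type*} [MeasurableSpace Z] (ν : Measure Z)
    [IsProbabilityMeasure ν] (g : Z → ℝ) (hg : Measurable g)
    {K l : ℝ} (hK : 0 < K) (hb : ∀ᵐ z ∂ν, |g z| ≤ K)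
    (hl : 0 ≤ l) (hlK : l * K ≤ 3/2) :
    ∫ z, Real.exp (l * ((∫ z, g z ∂ν) - g z)) ∂ν
      ≤ Real.exp (l^2 * ∫ z, (g z)^2 ∂ν) := by
  set μ := ∫ z, g z ∂ν with hμ
  set σ2 := ∫ z, (g z)^2 ∂ν with hσ2
  have hIg : Integrable g ν :=
    (integrable_const K).mono' hg.aestronglyMeasurable (by filter_upwards [hb] with z hz; simpa using hz)
  have hIg2 : Integrable (fun z => (g z)^2) ν := by
    refine (integrable_const (K^2)).mono' (hg.pow_const 2).aestronglyMeasurable ?_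
    filter_upwards [hb] with z hz
    have : |g z|^2 ≤ K^2 := pow_le_pow_left₀ (abs_nonneg _) hz 2
    simpa [abs_pow, sq_abs] using this
  have hIexp : Integrable (fun z => Real.exp (-(l * g z))) ν := by
    refine (integrable_const (Real.exp (l*K))).mono'
      ((hg.const_mul l).neg.exp).aestronglyMeasurable ?_
    filter_upwards [hb] with z hz
    have : -(l * g z) ≤ l * K := by
      have := neg_abs_le (g z)
      nlinarith [abs_nonneg (g z)]
    simpa [Real.abs_exp] using Real.exp_le_exp.mpr this
  have key : ∫ z, Real.exp (-(l * g z)) ∂ν ≤ 1 - l * μ + l^2 * σ2 := by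
    have hpt : ∀ᵐ z ∂ν, Real.exp (-(l * g z)) ≤ 1 - l * g z + l^2 * (g z)^2 := by
      filter_upwards [hb] with z hz
      have hm : -(l * g z) ≤ 3/2 := by
        have := neg_abs_le (g z)
        nlinarith [abs_nonneg (g z)]
      have := exp_le_one_add_add_sq hm
      calc Real.exp (-(l * g z)) ≤ 1 + (-(l * g z)) + (-(l * g z))^2 := this
        _ = 1 - l * g z + l^2 * (g z)^2 := by ring
    calc ∫ z, Real.exp (-(l * g z)) ∂ν
        ≤ ∫ z, (1 - l * g z + l^2 * (g z)^2) ∂ν := by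
          refine integral_mono_ae hIexp ?_ hpt
          exact ((integrable_const 1).sub (hIg.const_mul l)).add (hIg2.const_mul (l^2))
      _ = 1 - l * μ + l^2 * σ2 := by
          have h1 : ∫ z, (1 - l * g z + l ^ 2 * (g z) ^ 2) ∂ν
              = (∫ z, (1 - l * g z) ∂ν) + ∫ z, l ^ 2 * (g z) ^ 2 ∂ν :=
            integral_add ((integrable_const 1).sub (hIg.const_mul l)) (hIg2.const_mul (l ^ 2))
          have h2 : ∫ z, (1 - l * g z) ∂ν = (∫ z, (1:ℝ) ∂ν) - ∫ z, l * g z ∂ν :=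
            integral_sub (integrable_const 1) (hIg.const_mul l)
          rw [h1, h2, integral_const_mul, integral_const_mul, integral_const]
          simp [hμ, hσ2]
  calc ∫ z, Real.exp (l * (μ - g z)) ∂ν
      = Real.exp (l * μ) * ∫ z, Real.exp (-(l * g z)) ∂ν := by
        rw [← integral_const_mul]
        congr 1 with z
        rw [← Real.exp_add]
        ring_nf
    _ ≤ Real.exp (l * μ) * (1 - l * μ + l^2 * σ2) := by
        refine mul_le_mul_of_nonneg_left key (Real.exp_pos _).le
    _ ≤ Real.exp (l * μ) * Real.exp (-(l * μ) + l^2 * σ2) := by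
        refine mul_le_mul_of_nonneg_left ?_ (Real.exp_pos _).le
        have := Real.add_one_le_exp (-(l * μ) + l^2 * σ2)
        linarith
    _ = Real.exp (l^2 * σ2) := by rw [← Real.exp_add]; ring_nf

set_option maxHeartbeats 1000000 in
lemma bernstein_tail {Z : Type*} [MeasurableSpace Z] {Ω : Type*} [MeasurableSpace Ω]
    (P : Measure Ω) [IsProbabilityMeasure P] (ν : Measure Z) [IsProbabilityMeasure ν]
    (n : ℕ) (Z_ : Fin n → Ω → Z) (hZmeas : ∀ i, Measurable (Z_ i))
    (hlaw : ∀ i, Measure.map (Z_ i) P = ν)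
    (hindep : iIndepFun Z_ P)
    (g : Z → ℝ) (hg : Measurable g) {K : ℝ} (hK : 0 < K) (hb : ∀ᵐ z ∂ν, |g z| ≤ K)
    {V s : ℝ} (hV : 0 < V) (hσV : (∫ z, (g z)^2 ∂ν) ≤ V) (hs : 0 < s) :
    (P {ω | (n:ℝ) * s ≤ ∑ i, ((∫ z, g z ∂ν) - g (Z_ i ω))}).toReal
      ≤ Real.exp (-((n:ℝ) * s^2 / (4*V))) + Real.exp (-(3*(n:ℝ)*s/(4*K))) := by
  set μ := ∫ z, g z ∂ν with hμ
  set X : Fin n → Ω → ℝ := fun i ω => μ - g (Z_ i ω) with hX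
  have hXmeas : ∀ i, Measurable (X i) :=
    fun i => measurable_const.sub (hg.comp (hZmeas i))
  have hXindep : iIndepFun X P :=
    hindep.comp (fun _ z => μ - g z) (fun _ => measurable_const.sub hg)
  have hSeq : (∑ i, X i) = fun ω => ∑ i, X i ω := by
    funext ω; exact Finset.sum_apply ω Finset.univ X
  have haeP : ∀ i, ∀ᵐ ω ∂P, |g (Z_ i ω)| ≤ K := by
    intro i
    have hset : MeasurableSet {z : Z | |g z| ≤ K} :=
      measurableSet_le hg.abs measurable_const
    exact (ae_map_iff (hZmeas i).aemeasurable hset).mp (by rw [hlaw i]; exact hb)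
  -- general Chernoff step
  have main : ∀ l : ℝ, 0 ≤ l → l * K ≤ 3/2 →
      (P {ω | (n:ℝ) * s ≤ ∑ i, (μ - g (Z_ i ω))}).toReal
        ≤ Real.exp ((n:ℝ) * (l^2 * V) - l * ((n:ℝ) * s)) := by
    intro l hl hlK
    have hXbd : ∀ i, ∀ᵐ ω ∂P, X i ω ≤ |μ| + K := by
      intro i
      filter_upwards [haeP i] with ω hω
      have := neg_abs_le (g (Z_ i ω))
      have := le_abs_self μ
      simp only [hX]
      linarith
    have hint : ∀ i, Integrable (fun ω => Real.exp (l * X i ω)) P := by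
      intro i
      refine (integrable_const (Real.exp (l * (|μ| + K)))).mono'
        ((hXmeas i).const_mul l).exp.aestronglyMeasurable ?_
      filter_upwards [hXbd i] with ω hω
      rw [Real.norm_eq_abs, Real.abs_exp]
      exact Real.exp_le_exp.mpr (mul_le_mul_of_nonneg_left hω hl)
    have hmgf_i : ∀ i, mgf (X i) P l ≤ Real.exp (l^2 * V) := by
      intro i
      have hmap : mgf (X i) P l = ∫ z, Real.exp (l * (μ - g z)) ∂ν := by
        rw [mgf, ← hlaw i]
        exact (integral_map (hZmeas i).aemeasurable
            (((measurable_const.sub hg).const_mul l).exp).aestronglyMeasurable).symm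
      rw [hmap]
      refine (bernstein_mgf_bound ν g hg hK hb hl hlK).trans ?_
      exact Real.exp_le_exp.mpr (mul_le_mul_of_nonneg_left hσV (sq_nonneg l))
    have hintS : Integrable (fun ω => Real.exp (l * (∑ i, X i) ω)) P := by
      rw [hSeq]
      refine (integrable_const (Real.exp (l * ((n:ℝ) * (|μ| + K))))).mono'
        ((Finset.univ.measurable_sum (fun i _ => hXmeas i)).const_mul l).exp.aestronglyMeasurable ?_
      have hae : ∀ᵐ ω ∂P, ∀ i, X i ω ≤ |μ| + K := (ae_all_iff).mpr hXbd
      filter_upwards [hae] with ω hω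
      rw [Real.norm_eq_abs, Real.abs_exp]
      apply Real.exp_le_exp.mpr
      apply mul_le_mul_of_nonneg_left ?_ hl
      calc ∑ i, X i ω ≤ ∑ _i : Fin n, (|μ| + K) := Finset.sum_le_sum (fun i _ => hω i)
        _ = (n:ℝ) * (|μ| + K) := by simp; ring
    have hchern := measure_ge_le_exp_mul_mgf (μ := P) (X := ∑ i, X i)
      ((n:ℝ) * s) hl hintS
    have hmgfS : mgf (∑ i, X i) P l ≤ Real.exp (l^2 * V) ^ n := by
      rw [hXindep.mgf_sum hXmeas Finset.univ]
      calc ∏ i, mgf (X i) P l ≤ ∏ _i : Fin n, Real.exp (l^2 * V) :=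
            Finset.prod_le_prod (fun i _ => mgf_nonneg) (fun i _ => hmgf_i i)
        _ = Real.exp (l^2 * V) ^ n := by simp
    have hev : {ω | (n:ℝ) * s ≤ ∑ i, (μ - g (Z_ i ω))}
        = {ω | (n:ℝ) * s ≤ (∑ i, X i) ω} := by
      ext ω; simp [hX]
    rw [hev]
    refine hchern.trans ?_
    calc Real.exp (-l * ((n:ℝ)*s)) * mgf (∑ i, X i) P l
        ≤ Real.exp (-l * ((n:ℝ)*s)) * Real.exp (l^2 * V) ^ n :=
          mul_le_mul_of_nonneg_left hmgfS (Real.exp_pos _).le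
      _ = Real.exp ((n:ℝ) * (l^2 * V) - l * ((n:ℝ) * s)) := by
          rw [← Real.exp_nat_mul, ← Real.exp_add]; ring_nf
  rcases le_or_gt (K * s / 3) V with hcase | hcase
  · -- large variance case
    have hbd := main (s / (2*V)) (by positivity)
      (by rw [div_mul_eq_mul_div, div_le_iff₀ (by positivity)]; nlinarith)
    refine hbd.trans ?_
    have hexp : (n:ℝ) * ((s/(2*V))^2 * V) - (s/(2*V)) * ((n:ℝ) * s)
        = -((n:ℝ) * s^2 / (4*V)) := by
      field_simp
      ring
    rw [hexp]
    exact le_add_of_nonneg_right (Real.exp_pos _).le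
  · -- small variance case
    have hbd := main (3/(2*K)) (by positivity)
      (by rw [div_mul_eq_mul_div, div_le_iff₀ (by positivity)]; nlinarith)
    refine hbd.trans ?_
    refine le_add_of_nonneg_left (Real.exp_pos _).le |>.trans' ?_
    apply Real.exp_le_exp.mpr
    have hn0 : (0:ℝ) ≤ (n:ℝ) := Nat.cast_nonneg n
    have h1 : (3/(2*K))^2 * V ≤ (3/(2*K))^2 * (K*s/3) :=
      mul_le_mul_of_nonneg_left hcase.le (by positivity)
    have h2 : (3/(2*K))^2 * (K*s/3) = 3*s/(4*K) := by
      field_simp; ring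
    have h3 : (3/(2*K)) * s = 3*s/(2*K) := by ring
    have h4 : (n:ℝ) * ((3/(2*K))^2 * V) - (3/(2*K)) * ((n:ℝ) * s)
        ≤ (n:ℝ) * (3*s/(4*K)) - (n:ℝ) * (3*s/(2*K)) := by nlinarith
    refine h4.trans ?_
    have : (n:ℝ) * (3*s/(4*K)) - (n:ℝ) * (3*s/(2*K)) = -(3*(n:ℝ)*s/(4*K)) := by
      field_simp; ring
    linarith [this.le]

/-- Relative concentration inequality (Lemma 1): under the margin and
boundedness assumptions, the probability that the maximal normalized deviation
of the empirical risk exceeds `t` is bounded by the stated quantity. (The event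
`max_{1≤j≤M} (...) > t` is expressed as `∃ j, (...) > t`.) -/
theorem relative_concentration_inequality
    {Z : Type*} [MeasurableSpace Z] {Ω : Type*} [MeasurableSpace Ω]
    (P : Measure Ω) [IsProbabilityMeasure P]
    (ν : Measure Z) [IsProbabilityMeasure ν]
    {F : Type*} (Q : Z → F → ℝ)
    (hQmeas : ∀ f : F, Measurable fun z => Q z f)
    (n : ℕ) (hn : 1 ≤ n)
    (Z_ : Fin n → Ω → Z)
    (hZmeas : ∀ i, Measurable (Z_ i))
    (hlaw : ∀ i, Measure.map (Z_ i) P = ν)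
    (hindep : iIndepFun Z_ P)
    -- the risk `A` and its minimizer `f*`
    (A : F → ℝ) (hA : ∀ f, A f = ∫ z, Q z f ∂ν)
    (fstar : F) (hfstar : ∀ f, A fstar ≤ A f)
    -- the finite dictionary
    (M : ℕ) (fs : Fin M → F)
    -- margin and boundedness assumptions
    (κ c K : ℝ) (hκ : 1 ≤ κ) (hc : 0 < c) (hK : 1 ≤ K)
    (hmargin : ∀ j, ∫ z, (Q z (fs j) - Q z fstar) ^ 2 ∂ν
                      ≤ c * (A (fs j) - A fstar) ^ (1 / κ))
    (hbound : ∀ j, ∀ᵐ z ∂ν, |Q z (fs j) - Q z fstar| ≤ K)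
    -- the empirical risk
    (An : F → Ω → ℝ)
    (hAn : ∀ f ω, An f ω = (n : ℝ)⁻¹ * ∑ i, Q (Z_ i ω) f)
    (t x : ℝ) (ht : 0 < t) (hx : 0 < x) :
    (P {ω | ∃ j, t < (A (fs j) - An (fs j) ω - (A fstar - An fstar ω))
                      / (A (fs j) - A fstar + x)}).toReal
      ≤ M * ((1 + 4 * c * x ^ (1 / κ) / (n * (t * x) ^ 2))
              * Real.exp (-(n * (t * x) ^ 2 / (4 * c * x ^ (1 / κ))))
            + (1 + 4 * K / (3 * n * t * x))
              * Real.exp (-(3 * n * t * x / (4 * K)))) := by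
  have hκ0 : 0 < κ := lt_of_lt_of_le one_pos hκ
  have hκinv : 0 < 1/κ := by positivity
  have hκinv1 : 1/κ ≤ 1 := by
    rw [div_le_one hκ0]; exact hκ
  have hK0 : (0:ℝ) < K := lt_of_lt_of_le one_pos hK
  have hnpos : (0:ℝ) < (n:ℝ) := by exact_mod_cast hn
  set Bra : ℝ := (1 + 4 * c * x ^ (1 / κ) / (n * (t * x) ^ 2))
              * Real.exp (-(n * (t * x) ^ 2 / (4 * c * x ^ (1 / κ))))
            + (1 + 4 * K / (3 * n * t * x))
              * Real.exp (-(3 * n * t * x / (4 * K))) with hBra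
  set B : Fin M → Set Ω := fun j =>
    {ω | (n:ℝ) * (t * (A (fs j) - A fstar + x))
      ≤ ∑ i, ((∫ z, (Q z (fs j) - Q z fstar) ∂ν)
              - (Q (Z_ i ω) (fs j) - Q (Z_ i ω) fstar))} with hB
  -- per-j facts
  have key : ∀ j : Fin M, (P (B j)).toReal ≤ Bra ∧
      {ω | t < (A (fs j) - An (fs j) ω - (A fstar - An fstar ω))
            / (A (fs j) - A fstar + x)} ⊆ B j := by
    intro j
    set g : Z → ℝ := fun z => Q z (fs j) - Q z fstar with hg
    have hgmeas : Measurable g := (hQmeas (fs j)).sub (hQmeas fstar)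
    set a : ℝ := A (fs j) - A fstar with ha_def
    have ha : 0 ≤ a := sub_nonneg.mpr (hfstar (fs j))
    have hIg : Integrable g ν :=
      (integrable_const K).mono' hgmeas.aestronglyMeasurable
        (by filter_upwards [hbound j] with z hz; simpa using hz)
    have hIg2 : Integrable (fun z => (g z)^2) ν := by
      refine (integrable_const (K^2)).mono' (hgmeas.pow_const 2).aestronglyMeasurable ?_
      filter_upwards [hbound j] with z hz
      have : |g z|^2 ≤ K^2 := pow_le_pow_left₀ (abs_nonneg _) hz 2
      simpa [abs_pow, sq_abs] using this
    -- mean identification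
    have hμa : ∫ z, g z ∂ν = a := by
      by_cases hQint : Integrable (fun z => Q z fstar) ν
      · have h2 : Integrable (fun z => Q z (fs j)) ν := by
          have h3 := hIg.add hQint
          exact h3.congr (Filter.Eventually.of_forall fun z => by simp [hg])
        rw [ha_def, hA, hA, ← integral_sub h2 hQint]
      · have h2 : ¬ Integrable (fun z => Q z (fs j)) ν := by
          intro h
          refine hQint ?_
          have h3 := h.sub hIg
          convert h3 using 1
          funext z; simp [hg]
        have hA1 : A (fs j) = 0 := by rw [hA]; exact integral_undef h2
        have hA2 : A fstar = 0 := by rw [hA]; exact integral_undef hQint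
        have ha0 : a = 0 := by rw [ha_def, hA1, hA2]; ring
        have hσ0 : ∫ z, (g z)^2 ∂ν ≤ 0 := by
          have hm := hmargin j
          rw [← ha_def, ha0, Real.zero_rpow (ne_of_gt hκinv)] at hm
          simpa using hm
        have hg0 : g =ᵐ[ν] 0 := by
          have h00 : ∫ z, (g z)^2 ∂ν = 0 :=
            le_antisymm hσ0 (integral_nonneg fun z => sq_nonneg _)
          have := (integral_eq_zero_iff_of_nonneg_ae
            (Filter.Eventually.of_forall fun z => sq_nonneg (g z)) hIg2).mp h00
          filter_upwards [this] with z hz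
          simpa [pow_eq_zero_iff] using hz
        rw [ha0, integral_congr_ae hg0]
        simp
    have hσ2 : ∫ z, (g z)^2 ∂ν ≤ c * (a + x) ^ (1/κ) := by
      refine (hmargin j).trans ?_
      have : a ^ (1/κ) ≤ (a + x) ^ (1/κ) :=
        Real.rpow_le_rpow ha (by linarith) hκinv.le
      rw [← ha_def]
      exact mul_le_mul_of_nonneg_left this hc.le
    have hV : 0 < c * (a + x) ^ (1/κ) := by
      have : (0:ℝ) < (a + x) ^ (1/κ) := Real.rpow_pos_of_pos (by linarith) _
      positivity
    have hs : 0 < t * (a + x) := by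
      have : (0:ℝ) < a + x := by linarith
      positivity
    have htail := bernstein_tail P ν n Z_ hZmeas hlaw hindep g hgmeas hK0
      (hbound j) hV hσ2 hs
    constructor
    · refine le_trans htail ?_
      rw [hBra]
      have hterm1 : Real.exp (-((n:ℝ) * (t * (a+x))^2 / (4*(c * (a + x) ^ (1/κ)))))
          ≤ (1 + 4 * c * x ^ (1 / κ) / (n * (t * x) ^ 2))
              * Real.exp (-(n * (t * x) ^ 2 / (4 * c * x ^ (1 / κ)))) := by
        have hxp : (0:ℝ) < x ^ (1/κ) := Real.rpow_pos_of_pos hx _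
        have haxp : (0:ℝ) < (a+x) ^ (1/κ) := Real.rpow_pos_of_pos (by linarith) _
        have hD : x ^ ((2:ℝ) - 1/κ) ≤ (a+x) ^ ((2:ℝ) - 1/κ) :=
          Real.rpow_le_rpow hx.le (by linarith) (by linarith)
        have e_x : x ^ ((2:ℝ) - 1/κ) = x^2 / x^(1/κ) := by
          rw [Real.rpow_sub hx]
          norm_num
        have e_ax : (a+x) ^ ((2:ℝ) - 1/κ) = (a+x)^2 / (a+x)^(1/κ) := by
          rw [Real.rpow_sub (by linarith)]
          norm_num
        have hfrac : (t*x)^2/(c * x^(1/κ)) ≤ (t*(a+x))^2/(c * (a+x)^(1/κ)) := by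
          rw [e_x, e_ax] at hD
          rw [div_le_div_iff₀ (by positivity) (by positivity)]
          have h1 : x^2 * (a+x)^(1/κ) ≤ (a+x)^2 * x^(1/κ) := by
            rw [div_le_div_iff₀ (by positivity) (by positivity)] at hD
            linarith
          calc (t*x)^2 * (c * (a+x)^(1/κ)) = (t^2 * c) * (x^2 * (a+x)^(1/κ)) := by ring
            _ ≤ (t^2 * c) * ((a+x)^2 * x^(1/κ)) := by
                refine mul_le_mul_of_nonneg_left h1 (by positivity)
            _ = (t*(a+x))^2 * (c * x^(1/κ)) := by ring
        have hexp : Real.exp (-((n:ℝ) * (t * (a+x))^2 / (4*(c * (a + x) ^ (1/κ)))))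
            ≤ Real.exp (-(n * (t * x) ^ 2 / (4 * c * x ^ (1 / κ)))) := by
          apply Real.exp_le_exp.mpr
          rw [neg_le_neg_iff]
          calc (n:ℝ) * (t * x) ^ 2 / (4 * c * x ^ (1/κ))
              = ((n:ℝ)/4) * ((t*x)^2/(c * x^(1/κ))) := by
                first | (field_simp; ring) | field_simp
            _ ≤ ((n:ℝ)/4) * ((t*(a+x))^2/(c * (a+x)^(1/κ))) :=
                mul_le_mul_of_nonneg_left hfrac (by positivity)
            _ = (n:ℝ) * (t * (a+x))^2 / (4*(c * (a + x) ^ (1/κ))) := by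
                first | (field_simp; ring) | field_simp
        refine hexp.trans ?_
        refine le_mul_of_one_le_left (Real.exp_pos _).le ?_
        have : (0:ℝ) ≤ 4 * c * x ^ (1 / κ) / (n * (t * x) ^ 2) := by positivity
        linarith
      have hterm2 : Real.exp (-(3*(n:ℝ)*(t*(a+x))/(4*K)))
          ≤ (1 + 4 * K / (3 * n * t * x)) * Real.exp (-(3 * n * t * x / (4 * K))) := by
        have hexp : Real.exp (-(3*(n:ℝ)*(t*(a+x))/(4*K)))
            ≤ Real.exp (-(3 * n * t * x / (4 * K))) := by
          apply Real.exp_le_exp.mpr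
          rw [neg_le_neg_iff]
          have : (n:ℝ) * (t * x) ≤ (n:ℝ) * (t * (a+x)) := by
            nlinarith [mul_nonneg (mul_nonneg hnpos.le ht.le) ha]
          rw [div_le_div_iff₀ (by positivity) (by positivity)]
          nlinarith
        refine hexp.trans ?_
        refine le_mul_of_one_le_left (Real.exp_pos _).le ?_
        have : (0:ℝ) ≤ 4 * K / (3 * n * t * x) := by positivity
        linarith
      exact add_le_add hterm1 hterm2
    · intro ω hω
      simp only [Set.mem_setOf_eq] at hω ⊢
      have hax : (0:ℝ) < a + x := by linarith
      have hlt : t * (a + x) < A (fs j) - An (fs j) ω - (A fstar - An fstar ω) := by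
        rw [lt_div_iff₀ hax] at hω
        linarith
      have hdiff : An (fs j) ω - An fstar ω = (n:ℝ)⁻¹ * ∑ i, g (Z_ i ω) := by
        rw [hAn, hAn, ← mul_sub, ← Finset.sum_sub_distrib]
      have hnum : A (fs j) - An (fs j) ω - (A fstar - An fstar ω)
          = a - (n:ℝ)⁻¹ * ∑ i, g (Z_ i ω) := by
        rw [ha_def, ← hdiff]; ring
      rw [hnum] at hlt
      have hsum : ∑ i, ((∫ z, g z ∂ν) - g (Z_ i ω))
          = (n:ℝ) * a - ∑ i, g (Z_ i ω) := by
        rw [Finset.sum_sub_distrib, hμa]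
        simp [mul_comm]
      suffices hgoal : (n:ℝ) * (t * (a + x)) ≤ ∑ i, ((∫ z, g z ∂ν) - g (Z_ i ω)) by
        simpa only [hB, hg, Set.mem_setOf_eq] using hgoal
      rw [hsum]
      have h6 : (n:ℝ) * (t * (a+x)) < (n:ℝ) * (a - (n:ℝ)⁻¹ * ∑ i, g (Z_ i ω)) :=
        mul_lt_mul_of_pos_left hlt hnpos
      have h7 : (n:ℝ) * ((n:ℝ)⁻¹ * ∑ i, g (Z_ i ω)) = ∑ i, g (Z_ i ω) := by
        rw [← mul_assoc, mul_inv_cancel₀ (ne_of_gt hnpos), one_mul]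
      have h8 : (n:ℝ) * (a - (n:ℝ)⁻¹ * ∑ i, g (Z_ i ω))
          = (n:ℝ) * a - ∑ i, g (Z_ i ω) := by
        rw [mul_sub, h7]
      exact (h6.trans_eq h8).le
  -- union bound
  have hsub : {ω | ∃ j, t < (A (fs j) - An (fs j) ω - (A fstar - An fstar ω))
                      / (A (fs j) - A fstar + x)} ⊆ ⋃ j, B j := by
    rintro ω ⟨j, hj⟩
    exact Set.mem_iUnion.mpr ⟨j, (key j).2 hj⟩
  calc (P {ω | ∃ j, t < (A (fs j) - An (fs j) ω - (A fstar - An fstar ω))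
                      / (A (fs j) - A fstar + x)}).toReal
      ≤ (∑ j, P (B j)).toReal := by
        refine ENNReal.toReal_mono (ENNReal.sum_ne_top.mpr fun j _ => measure_ne_top P _) ?_
        exact (measure_mono hsub).trans ((measure_iUnion_le B).trans_eq (tsum_fintype _))
    _ = ∑ j, (P (B j)).toReal := ENNReal.toReal_sum fun j _ => measure_ne_top P _
    _ ≤ ∑ _j : Fin M, Bra := Finset.sum_le_sum fun j _ => (key j).1
    _ = M * Bra := by simp [Finset.sum_const, nsmul_eq_mul]
end

section
/- Margin assumption in bounded regression. Let (X,A) be a measurable space and let (X,Y) be a random pair with values in X × [0,1], with law π and marginal P^X on X. Let f*(x) = E[Y | X = x] be the regression function. Then for every measurable function f : X → [0,1], with Q((x,y),g) = (y − g(x))²: E[ (Q((X,Y),f) − Q((X,Y),f*))² ] ≤ 16 ( E[Q((X,Y),f)] − E[Q((X,Y),f*)] ) = 16 ‖f − f*‖²_{L²(P^X)}. In other words, every probability distribution π on X × [0,1] satisfies the margin assumption MA(1, 16, F₁), where F₁ is the set of all measurable functions from X to [0,1]. -/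
open MeasureTheory

private lemma integrable_of_bound {α : Type*} [MeasurableSpace α] {μ : Measure α}
    [IsFiniteMeasure μ] {w : α → ℝ} (hw : Measurable w) (C : ℝ)
    (hb : ∀ᵐ z ∂μ, |w z| ≤ C) : Integrable w μ := by
  refine (integrable_const C).mono' hw.aestronglyMeasurable ?_
  filter_upwards [hb] with z hz
  simpa [Real.norm_eq_abs] using hz

private def mfst (X : Type*) [mX : MeasurableSpace X] : MeasurableSpace (X × ℝ) :=
  mX.comap Prod.fst

/-- Orthogonality: `∫ g(x) (y - f*(x)) dν = 0` for bounded measurable `g`. -/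
private lemma orth {X : Type*} [MeasurableSpace X]
    (ν : Measure (X × ℝ)) [IsProbabilityMeasure ν]
    (hY : ∀ᵐ z ∂ν, z.2 ∈ Set.Icc (0 : ℝ) 1)
    (fstar : X → ℝ) (hfstarmeas : Measurable fstar)
    (hfstar01 : ∀ x, fstar x ∈ Set.Icc (0 : ℝ) 1)
    (hcond : ∀ S : Set X, MeasurableSet S →
      ∫ z in Prod.fst ⁻¹' S, z.2 ∂ν = ∫ z in Prod.fst ⁻¹' S, fstar z.1 ∂ν)
    (g : X → ℝ) (hg : Measurable g) (hgb : ∀ x, |g x| ≤ 1) :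
    ∫ z, g z.1 * (z.2 - fstar z.1) ∂ν = 0 := by
  have hm : mfst X ≤ Prod.instMeasurableSpace := measurable_fst.comap_le
  haveI : SigmaFinite (ν.trim hm) := inferInstance
  set h : X × ℝ → ℝ := fun z => z.2 - fstar z.1 with hhdef
  have hYb : ∀ᵐ z ∂ν, |z.2| ≤ 1 := by
    filter_upwards [hY] with z hz
    exact abs_le.2 ⟨by linarith [hz.1], hz.2⟩
  have hIy : Integrable (fun z : X × ℝ => z.2) ν :=
    integrable_of_bound measurable_snd 1 hYb
  have hIfs : Integrable (fun z : X × ℝ => fstar z.1) ν := by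
    refine integrable_of_bound (hfstarmeas.comp measurable_fst) 1 ?_
    exact Filter.Eventually.of_forall fun z => abs_le.2 ⟨by linarith [(hfstar01 z.1).1],
      (hfstar01 z.1).2⟩
  have hIh : Integrable h ν := hIy.sub hIfs
  have hfstm : Measurable[mfst X] (Prod.fst : X × ℝ → X) := fun s hs => ⟨s, hs, rfl⟩
  have hgstm : StronglyMeasurable[mfst X] (fun z : X × ℝ => g z.1) :=
    (hg.comp hfstm).stronglyMeasurable
  have hIgh : Integrable ((fun z : X × ℝ => g z.1) * h) ν := by
    refine integrable_of_bound ((hg.comp measurable_fst).mul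
      (measurable_snd.sub (hfstarmeas.comp measurable_fst))) 2 ?_
    filter_upwards [hYb] with z hz
    have h1 : |g z.1| ≤ 1 := hgb z.1
    have h2 : |z.2 - fstar z.1| ≤ 2 := by
      have := (hfstar01 z.1).1; have := (hfstar01 z.1).2
      have := abs_le.1 hz
      rw [abs_le]; constructor <;> linarith [this.1, this.2]
    calc |g z.1 * (z.2 - fstar z.1)| = |g z.1| * |z.2 - fstar z.1| := abs_mul _ _
      _ ≤ 1 * 2 := mul_le_mul h1 h2 (abs_nonneg _) zero_le_one
      _ = 2 := by norm_num
  have hzero : (fun _ : X × ℝ => (0 : ℝ)) =ᵐ[ν] ν[h|mfst X] := by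
    refine ae_eq_condExp_of_forall_setIntegral_eq hm hIh
      (fun s _ _ => integrableOn_zero) (fun s hs _ => ?_)
      (stronglyMeasurable_zero.aestronglyMeasurable)
    obtain ⟨S, hS, rfl⟩ := hs
    rw [integral_zero]
    have : ∫ z in Prod.fst ⁻¹' S, h z ∂ν
        = (∫ z in Prod.fst ⁻¹' S, z.2 ∂ν) - ∫ z in Prod.fst ⁻¹' S, fstar z.1 ∂ν :=
      integral_sub hIy.integrableOn hIfs.integrableOn
    rw [this, hcond S hS, sub_self]
  have hmul : ν[(fun z : X × ℝ => g z.1) * h|mfst X]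
      =ᵐ[ν] (fun z : X × ℝ => g z.1) * ν[h|mfst X] :=
    condExp_mul_of_stronglyMeasurable_left hgstm hIgh hIh
  have h1 : ∫ z, ((fun z : X × ℝ => g z.1) * h) z ∂ν
      = ∫ z, (ν[(fun z : X × ℝ => g z.1) * h|mfst X]) z ∂ν := (integral_condExp hm).symm
  have h2 : ∫ z, (ν[(fun z : X × ℝ => g z.1) * h|mfst X]) z ∂ν = 0 := by
    rw [integral_congr_ae hmul]
    have : (fun z : X × ℝ => g z.1) * ν[h|mfst X] =ᵐ[ν] fun _ => (0 : ℝ) := by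
      filter_upwards [hzero] with z hz
      simp [Pi.mul_apply, ← hz]
    rw [integral_congr_ae this, integral_zero]
  calc ∫ z, g z.1 * (z.2 - fstar z.1) ∂ν
      = ∫ z, ((fun z : X × ℝ => g z.1) * h) z ∂ν := rfl
    _ = 0 := h1.trans h2

/-- Margin assumption MA(1, 16, F₁) in bounded regression: for every measurable
`f : X → [0,1]`, `E[(Q(Z,f) − Q(Z,f*))²] ≤ 16 (A(f) − A(f*))`, and
`A(f) − A(f*) = ‖f − f*‖²_{L²(Pˣ)}`. Here `ν` is the joint law of `(X,Y)`. -/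
theorem margin_assumption_bounded_regression
    {X : Type*} [MeasurableSpace X]
    (ν : Measure (X × ℝ)) [IsProbabilityMeasure ν]
    (hY : ∀ᵐ z ∂ν, z.2 ∈ Set.Icc (0 : ℝ) 1)
    (PX : Measure X) (hPX : PX = Measure.map Prod.fst ν)
    -- `f*` is (a version of) the regression function `E[Y | X = ·]`
    (fstar : X → ℝ) (hfstarmeas : Measurable fstar)
    (hfstar01 : ∀ x, fstar x ∈ Set.Icc (0 : ℝ) 1)
    (hcond : ∀ S : Set X, MeasurableSet S →
      ∫ z in Prod.fst ⁻¹' S, z.2 ∂ν = ∫ z in Prod.fst ⁻¹' S, fstar z.1 ∂ν)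
    (f : X → ℝ) (hfmeas : Measurable f) (hf01 : ∀ x, f x ∈ Set.Icc (0 : ℝ) 1) :
    (∫ z, ((z.2 - f z.1) ^ 2 - (z.2 - fstar z.1) ^ 2) ^ 2 ∂ν
        ≤ 16 * ((∫ z, (z.2 - f z.1) ^ 2 ∂ν) - ∫ z, (z.2 - fstar z.1) ^ 2 ∂ν)) ∧
      (∫ z, (z.2 - f z.1) ^ 2 ∂ν) - (∫ z, (z.2 - fstar z.1) ^ 2 ∂ν)
        = ∫ x, (f x - fstar x) ^ 2 ∂PX := by
  set d : X → ℝ := fun x => f x - fstar x with hddef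
  have hdmeas : Measurable d := hfmeas.sub hfstarmeas
  have hdb : ∀ x, |d x| ≤ 1 := fun x => by
    have h1 := (hf01 x).1; have h2 := (hf01 x).2
    have h3 := (hfstar01 x).1; have h4 := (hfstar01 x).2
    rw [abs_le]; constructor <;> simp only [hddef] <;> linarith
  have hYb : ∀ᵐ z ∂ν, |z.2| ≤ 1 := by
    filter_upwards [hY] with z hz
    exact abs_le.2 ⟨by linarith [hz.1], hz.2⟩
  -- orthogonality
  have horth : ∫ z, d z.1 * (z.2 - fstar z.1) ∂ν = 0 :=
    orth ν hY fstar hfstarmeas hfstar01 hcond d hdmeas hdb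
  -- integrability facts
  have hbd : ∀ (g : X → ℝ), (∀ x, g x ∈ Set.Icc (0:ℝ) 1) → ∀ᵐ z ∂ν, |z.2 - g z.1| ≤ 2 := by
    intro g hg
    filter_upwards [hYb] with z hz
    have := (hg z.1).1; have := (hg z.1).2
    have := abs_le.1 hz
    rw [abs_le]; constructor <;> linarith [this.1, this.2]
  have hIf2 : Integrable (fun z : X × ℝ => (z.2 - f z.1) ^ 2) ν := by
    refine integrable_of_bound ((measurable_snd.sub (hfmeas.comp measurable_fst)).pow_const 2)
      4 ?_
    filter_upwards [hbd f hf01] with z hz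
    rw [abs_pow]
    calc |z.2 - f z.1| ^ 2 ≤ 2 ^ 2 := by
          exact pow_le_pow_left₀ (abs_nonneg _) hz 2
      _ = 4 := by norm_num
  have hIfs2 : Integrable (fun z : X × ℝ => (z.2 - fstar z.1) ^ 2) ν := by
    refine integrable_of_bound
      ((measurable_snd.sub (hfstarmeas.comp measurable_fst)).pow_const 2) 4 ?_
    filter_upwards [hbd fstar hfstar01] with z hz
    rw [abs_pow]
    calc |z.2 - fstar z.1| ^ 2 ≤ 2 ^ 2 := pow_le_pow_left₀ (abs_nonneg _) hz 2
      _ = 4 := by norm_num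
  have hId2 : Integrable (fun z : X × ℝ => (d z.1) ^ 2) ν := by
    refine integrable_of_bound ((hdmeas.comp measurable_fst).pow_const 2) 1 ?_
    refine Filter.Eventually.of_forall fun z => ?_
    rw [abs_pow]
    calc |d z.1| ^ 2 ≤ 1 ^ 2 := pow_le_pow_left₀ (abs_nonneg _) (hdb z.1) 2
      _ = 1 := one_pow 2
  have hIdh : Integrable (fun z : X × ℝ => d z.1 * (z.2 - fstar z.1)) ν := by
    refine integrable_of_bound ((hdmeas.comp measurable_fst).mul
      (measurable_snd.sub (hfstarmeas.comp measurable_fst))) 2 ?_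
    filter_upwards [hbd fstar hfstar01] with z hz
    calc |d z.1 * (z.2 - fstar z.1)| = |d z.1| * |z.2 - fstar z.1| := abs_mul _ _
      _ ≤ 1 * 2 := mul_le_mul (hdb z.1) hz (abs_nonneg _) zero_le_one
      _ = 2 := by norm_num
  -- the key algebraic identity pointwise
  have hpt : ∀ z : X × ℝ, (z.2 - f z.1) ^ 2 - (z.2 - fstar z.1) ^ 2
      = d z.1 ^ 2 - 2 * (d z.1 * (z.2 - fstar z.1)) := by
    intro z; simp only [hddef]; ring
  -- excess risk equals ∫ d²
  have hexcess : (∫ z, (z.2 - f z.1) ^ 2 ∂ν) - (∫ z, (z.2 - fstar z.1) ^ 2 ∂ν)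
      = ∫ z, (d z.1) ^ 2 ∂ν := by
    rw [← integral_sub hIf2 hIfs2]
    have : ∫ z, ((z.2 - f z.1) ^ 2 - (z.2 - fstar z.1) ^ 2) ∂ν
        = ∫ z, (d z.1 ^ 2 - 2 * (d z.1 * (z.2 - fstar z.1))) ∂ν :=
      integral_congr_ae (Filter.Eventually.of_forall fun z => hpt z)
    rw [this, integral_sub hId2 ((hIdh.const_mul 2))]
    rw [integral_const_mul 2 (fun z : X × ℝ => d z.1 * (z.2 - fstar z.1)), horth]
    ring
  have hd2nonneg : 0 ≤ ∫ z, (d z.1) ^ 2 ∂ν :=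
    integral_nonneg fun z => sq_nonneg _
  constructor
  · -- the inequality
    have hle : ∫ z, ((z.2 - f z.1) ^ 2 - (z.2 - fstar z.1) ^ 2) ^ 2 ∂ν
        ≤ ∫ z, 4 * (d z.1) ^ 2 ∂ν := by
      refine integral_mono_ae ?_ (hId2.const_mul 4) ?_
      · refine integrable_of_bound
          (((measurable_snd.sub (hfmeas.comp measurable_fst)).pow_const 2 |>.sub
            ((measurable_snd.sub (hfstarmeas.comp measurable_fst)).pow_const 2)).pow_const 2)
          4 ?_
        filter_upwards [hY] with z hz
        have h1 := (hf01 z.1).1; have h2 := (hf01 z.1).2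
        have h3 := (hfstar01 z.1).1; have h4 := (hfstar01 z.1).2
        have h5 := hz.1; have h6 := hz.2
        have hq : (z.2 - f z.1) ^ 2 - (z.2 - fstar z.1) ^ 2
            = (fstar z.1 - f z.1) * (2 * z.2 - f z.1 - fstar z.1) := by ring
        rw [abs_pow, hq, abs_mul]
        have ha : |fstar z.1 - f z.1| ≤ 1 := abs_le.2 ⟨by linarith, by linarith⟩
        have hb' : |2 * z.2 - f z.1 - fstar z.1| ≤ 2 :=
          abs_le.2 ⟨by linarith, by linarith⟩
        calc (|fstar z.1 - f z.1| * |2 * z.2 - f z.1 - fstar z.1|) ^ 2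
            ≤ (1 * 2) ^ 2 := by
              refine pow_le_pow_left₀ (mul_nonneg (abs_nonneg _) (abs_nonneg _)) ?_ 2
              exact mul_le_mul ha hb' (abs_nonneg _) zero_le_one
          _ = 4 := by norm_num
      · filter_upwards [hY] with z hz
        have h1 := (hf01 z.1).1; have h2 := (hf01 z.1).2
        have h3 := (hfstar01 z.1).1; have h4 := (hfstar01 z.1).2
        have h5 := hz.1; have h6 := hz.2
        have hq : (z.2 - f z.1) ^ 2 - (z.2 - fstar z.1) ^ 2
            = d z.1 * (f z.1 + fstar z.1 - 2 * z.2) := by simp only [hddef]; ring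
        rw [hq, mul_pow]
        have hb' : (f z.1 + fstar z.1 - 2 * z.2) ^ 2 ≤ 4 := by
          have : |f z.1 + fstar z.1 - 2 * z.2| ≤ 2 :=
            abs_le.2 ⟨by linarith, by linarith⟩
          calc (f z.1 + fstar z.1 - 2 * z.2) ^ 2 = |f z.1 + fstar z.1 - 2 * z.2| ^ 2 := by
                rw [sq_abs]
            _ ≤ 2 ^ 2 := pow_le_pow_left₀ (abs_nonneg _) this 2
            _ = 4 := by norm_num
        calc d z.1 ^ 2 * (f z.1 + fstar z.1 - 2 * z.2) ^ 2
            ≤ d z.1 ^ 2 * 4 := by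
              exact mul_le_mul_of_nonneg_left hb' (sq_nonneg _)
          _ = 4 * d z.1 ^ 2 := by ring
    rw [hexcess]
    calc ∫ z, ((z.2 - f z.1) ^ 2 - (z.2 - fstar z.1) ^ 2) ^ 2 ∂ν
        ≤ ∫ z, 4 * (d z.1) ^ 2 ∂ν := hle
      _ = 4 * ∫ z, (d z.1) ^ 2 ∂ν := integral_const_mul _ _
      _ ≤ 16 * ∫ z, (d z.1) ^ 2 ∂ν := by linarith
  · -- the equality
    rw [hexcess, hPX]
    rw [integral_map measurable_fst.aemeasurable
      ((hdmeas.pow_const 2).aestronglyMeasurable)]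
end
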